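/- Let T₀ be a closed densely defined operator on a Hilbert space H, and let W : H → H be a bounded operator with Re⟨(W − I)u, u⟩ ≥ 0 for all u ∈ H. Then the bounded operator I + (T₀*T₀ + I)^{−1/2}(W − I)(T₀*T₀ + I)^{−1/2} is boundedly invertible with inverse of norm at most 1, and consequently the operator T₀*T₀ + W (defined on dom(T₀*T₀)) is boundedly invertible with ‖(T₀*T₀ + W)^{−1}‖ ≤ 1. -/

import Mathlib

open scoped InnerProductSpace

/-- Let `T₀` be closed densely defined, `S = T₀*T₀` (the self-adjoint operator
associated with the form `‖T₀x‖²`), `R = (T₀*T₀ + I)^{-1/2}` (the positive self-adjoint square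
root of the inverse of `S + I`), and `W` bounded with `Re ⟨(W−I)u, u⟩ ≥ 0`.  Then
`I + R(W−I)R` is boundedly invertible with inverse of norm at most `1`, and `S + W` (on
`dom S`) is boundedly invertible with inverse of norm at most `1`. -/
theorem stmt_3 {H : Type*} [NormedAddCommGroup H] [InnerProductSpace ℂ H] [CompleteSpace H]
    (T0 : H →ₗ.[ℂ] H) (hdense : Dense (T0.domain : Set H))
    (hclosed : IsClosed (T0.graph : Set (H × H)))
    (S : H →ₗ.[ℂ] H)
    (hSdom : ∀ x, x ∈ S.domain → x ∈ T0.domain)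
    (hSform : ∀ (x : S.domain) (y : T0.domain),
      ⟪S x, (y : H)⟫_ℂ = ⟪T0 ⟨(x : H), hSdom _ x.2⟩, T0 y⟫_ℂ)
    (R : H →L[ℂ] H) (hRsa : IsSelfAdjoint R)
    (hRpos : ∀ u : H, 0 ≤ (⟪R u, u⟫_ℂ).re)
    (hRsq : ∀ u : H, ∃ h : R (R u) ∈ S.domain, S ⟨R (R u), h⟩ + R (R u) = u)
    (hRsq' : ∀ x : S.domain, R (R (S x + (x : H))) = (x : H))
    (W : H →L[ℂ] H) (hW : ∀ u : H, 0 ≤ (⟪W u - u, u⟫_ℂ).re) :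
    (∃ J : H →L[ℂ] H, ‖J‖ ≤ 1 ∧
      (1 + R ∘L ((W - 1) ∘L R)) ∘L J = 1 ∧ J ∘L (1 + R ∘L ((W - 1) ∘L R)) = 1) ∧
    (∃ G : H →L[ℂ] H, ‖G‖ ≤ 1 ∧
      (∀ y : H, ∃ h : G y ∈ S.domain, S ⟨G y, h⟩ + W (G y) = y) ∧
      (∀ x : S.domain, G (S x + W (x : H)) = (x : H))) := by
  have hRsym : ∀ x y : H, ⟪R x, y⟫_ℂ = ⟪x, R y⟫_ℂ := by
    intro x y
    conv_lhs => rw [← hRsa.adjoint_eq]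
    exact ContinuousLinearMap.adjoint_inner_left R y x
  set A : H →L[ℂ] H := 1 + R ∘L ((W - 1) ∘L R) with hA
  have hAapp : ∀ u : H, A u = u + R (W (R u) - R u) := by
    intro u
    simp [hA, ContinuousLinearMap.sub_apply]
  -- coercivity of A
  have hcoer : ∀ u : H, ‖u‖ ^ 2 ≤ (⟪A u, u⟫_ℂ).re := by
    intro u
    have h1 : ⟪A u, u⟫_ℂ = ⟪u, u⟫_ℂ + ⟪W (R u) - R u, R u⟫_ℂ := by
      rw [hAapp, inner_add_left, hRsym]
    rw [h1, Complex.add_re]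
    have h2 := hW (R u)
    have h3 : (⟪u, u⟫_ℂ).re = ‖u‖ ^ 2 := by
      simpa using inner_self_eq_norm_sq (𝕜 := ℂ) u
    linarith
  have hlow : ∀ u : H, ‖u‖ ≤ ‖A u‖ := by
    intro u
    rcases eq_or_ne u 0 with rfl | hu
    · simp
    · have h1 := hcoer u
      have h2 : (⟪A u, u⟫_ℂ).re ≤ ‖A u‖ * ‖u‖ := by
        calc (⟪A u, u⟫_ℂ).re ≤ ‖⟪A u, u⟫_ℂ‖ := Complex.re_le_norm _
        _ ≤ ‖A u‖ * ‖u‖ := norm_inner_le_norm _ _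
      have hu' : 0 < ‖u‖ := norm_pos_iff.mpr hu
      nlinarith
  have hanti : AntilipschitzWith 1 A :=
    ContinuousLinearMap.antilipschitz_of_bound A (by simpa using hlow)
  have hker : LinearMap.ker (A : H →ₗ[ℂ] H) = ⊥ :=
    LinearMap.ker_eq_bot.mpr hanti.injective
  have hclosedrange : IsClosed (LinearMap.range (A : H →ₗ[ℂ] H) : Set H) := by
    have := hanti.isClosed_range A.uniformContinuous
    exact this
  have : CompleteSpace (LinearMap.range (A : H →ₗ[ℂ] H)) := hclosedrange.completeSpace_coe
  have hrange : LinearMap.range (A : H →ₗ[ℂ] H) = ⊤ := by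
    rw [← Submodule.orthogonal_eq_bot_iff]
    rw [Submodule.eq_bot_iff]
    intro u hu
    have h0 : ⟪A u, u⟫_ℂ = 0 :=
      (Submodule.mem_orthogonal _ u).mp hu (A u) ⟨u, rfl⟩
    have h1 := hcoer u
    rw [h0] at h1
    simp only [Complex.zero_re] at h1
    have : ‖u‖ = 0 := by nlinarith [norm_nonneg u]
    simpa using this
  set e := ContinuousLinearEquiv.ofBijective A hker hrange with he
  set J : H →L[ℂ] H := (e.symm : H →L[ℂ] H) with hJ
  have hAJ : ∀ v : H, A (J v) = v := fun v => e.apply_symm_apply v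
  have hJA : ∀ v : H, J (A v) = v := fun v => e.symm_apply_apply v
  have hJnorm : ‖J‖ ≤ 1 := by
    refine ContinuousLinearMap.opNorm_le_bound J zero_le_one fun y => ?_
    calc ‖J y‖ ≤ ‖A (J y)‖ := hlow _
    _ = 1 * ‖y‖ := by rw [hAJ]; ring
  refine ⟨⟨J, hJnorm, ?_, ?_⟩, ?_⟩
  · ext v; simpa using hAJ v
  · ext v; simpa using hJA v
  -- second part
  set G : H →L[ℂ] H :=
    R ∘L (R ∘L (1 - (W - 1) ∘L (R ∘L (J ∘L R)))) with hG
  have hGapp : ∀ y : H, G y = R (R (y - (W (R (J (R y))) - R (J (R y))))) := by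
    intro y
    simp [hG, ContinuousLinearMap.sub_apply]
  have key : ∀ y : H, R (y - (W (R (J (R y))) - R (J (R y)))) = J (R y) := by
    intro y
    have h := hAJ (R y)
    rw [hAapp] at h
    have h2 : R (y - (W (R (J (R y))) - R (J (R y))))
        = R y - R (W (R (J (R y))) - R (J (R y))) := by rw [map_sub]
    have h3 : R (W (R (J (R y))) - R (J (R y))) = R y - J (R y) := eq_sub_of_add_eq' h
    rw [h2, h3]; abel
  have hGapp2 : ∀ y : H, G y = R (J (R y)) := by
    intro y; rw [hGapp, key]
  -- G solves the equation
  have prop1 : ∀ y : H, ∃ h : G y ∈ S.domain, S ⟨G y, h⟩ + W (G y) = y := by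
    intro y
    obtain ⟨h, hs⟩ := hRsq (y - (W (R (J (R y))) - R (J (R y))))
    rw [hGapp y]
    refine ⟨h, ?_⟩
    have h4 : S ⟨R (R (y - (W (R (J (R y))) - R (J (R y))))), h⟩
        + W (R (R (y - (W (R (J (R y))) - R (J (R y))))))
        = (S ⟨R (R (y - (W (R (J (R y))) - R (J (R y))))), h⟩
            + R (R (y - (W (R (J (R y))) - R (J (R y))))))
          + (W (R (R (y - (W (R (J (R y))) - R (J (R y))))))
            - R (R (y - (W (R (J (R y))) - R (J (R y)))))) := by abel
    rw [h4, hs, key y]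
    abel
  -- coercivity of S + W
  have hbound : ∀ x : S.domain, ‖(x : H)‖ ≤ ‖S x + W (x : H)‖ := by
    intro x
    have hS0 : 0 ≤ (⟪S x, (x : H)⟫_ℂ).re := by
      have h := hSform x ⟨(x : H), hSdom _ x.2⟩
      have h4 : (⟪T0 ⟨(x : H), hSdom _ x.2⟩, T0 ⟨(x : H), hSdom _ x.2⟩⟫_ℂ).re
          = ‖T0 ⟨(x : H), hSdom _ x.2⟩‖ ^ 2 := by
        simpa using inner_self_eq_norm_sq (𝕜 := ℂ) (T0 ⟨(x : H), hSdom _ x.2⟩)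
      rw [h, h4]
      positivity
    have hW0 : ‖(x : H)‖ ^ 2 ≤ (⟪W (x : H), (x : H)⟫_ℂ).re := by
      have h1 := hW (x : H)
      have h2 : ⟪W (x : H), (x : H)⟫_ℂ
          = ⟪W (x : H) - (x : H), (x : H)⟫_ℂ + ⟪(x : H), (x : H)⟫_ℂ := by
        rw [← inner_add_left]; congr 1; abel
      have h3 : (⟪(x : H), (x : H)⟫_ℂ).re = ‖(x : H)‖ ^ 2 := by
        simpa using inner_self_eq_norm_sq (𝕜 := ℂ) ((x : H))
      rw [h2, Complex.add_re, h3]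
      linarith
    have hco : ‖(x : H)‖ ^ 2 ≤ (⟪S x + W (x : H), (x : H)⟫_ℂ).re := by
      rw [inner_add_left, Complex.add_re]
      linarith
    rcases eq_or_ne ((x : H)) 0 with h0 | h0
    · simp [h0]
    · have h2 : (⟪S x + W (x : H), (x : H)⟫_ℂ).re ≤ ‖S x + W (x : H)‖ * ‖(x : H)‖ := by
        calc (⟪S x + W (x : H), (x : H)⟫_ℂ).re ≤ ‖⟪S x + W (x : H), (x : H)⟫_ℂ‖ :=
          Complex.re_le_norm _
        _ ≤ ‖S x + W (x : H)‖ * ‖(x : H)‖ := norm_inner_le_norm _ _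
      have hu' : 0 < ‖(x : H)‖ := norm_pos_iff.mpr h0
      nlinarith
  have hGnorm : ‖G‖ ≤ 1 := by
    refine ContinuousLinearMap.opNorm_le_bound G zero_le_one fun y => ?_
    obtain ⟨h, hs⟩ := prop1 y
    calc ‖G y‖ = ‖((⟨G y, h⟩ : S.domain) : H)‖ := rfl
    _ ≤ ‖S ⟨G y, h⟩ + W (G y)‖ := hbound _
    _ = 1 * ‖y‖ := by rw [hs]; ring
  refine ⟨G, hGnorm, prop1, ?_⟩
  intro x
  obtain ⟨h, hs⟩ := prop1 (S x + W (x : H))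
  set x' : S.domain := ⟨G (S x + W (x : H)), h⟩ with hx'
  have hd : ‖((x' - x : S.domain) : H)‖ ≤ ‖S (x' - x) + W ((x' - x : S.domain) : H)‖ :=
    hbound _
  have hzero : S (x' - x) + W ((x' - x : S.domain) : H) = 0 := by
    rw [S.map_sub]
    have hcoe : ((x' - x : S.domain) : H) = (x' : H) - (x : H) := rfl
    rw [hcoe, map_sub]
    have : S x' + W ((x' : H)) = S x + W ((x : H)) := hs
    rw [← sub_eq_zero] at this
    calc S x' - S x + (W ((x' : H)) - W ((x : H)))
        = (S x' + W ((x' : H))) - (S x + W ((x : H))) := by abel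
    _ = 0 := this
  rw [hzero] at hd
  simp only [norm_zero] at hd
  have h5 : ((x' - x : S.domain) : H) = 0 := by
    have := norm_nonneg ((x' - x : S.domain) : H)
    have h6 : ‖((x' - x : S.domain) : H)‖ = 0 := le_antisymm hd this
    simpa using h6
  have h7 : (x' : H) = (x : H) := by
    have hcoe : ((x' - x : S.domain) : H) = (x' : H) - (x : H) := rfl
    rw [hcoe, sub_eq_zero] at h5
    exact h5
  exact h7
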